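/- Let A be a positive-definite symmetric real d×d matrix, let δ : (0,∞) → (0,1] satisfy √ε / δ(ε) → 0 as ε → 0⁺, and let h : ℝ^d → ℝ be continuously differentiable with ∇h(0) = 0. Then lim_{ε→0⁺} (ε/δ(ε)²) · (2πε)^{-d/2} ∫_{B_{δ(ε)}} e^{-(x·Ax)/(2ε)} · |∇h(x/δ(ε))|² dx = 0. -/

import Mathlib

open Filter Topology MeasureTheory

/-- Gaussian gradient scaling lemma: for `A` positive definite, `√ε/δ(ε) → 0` with
`δ(ε) ∈ (0,1]` and `h` a `C¹` function with `∇h(0) = 0`,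
`(ε/δ(ε)²)(2πε)^{-d/2} ∫_{B_{δ(ε)}} e^{-x·Ax/(2ε)} |∇h(x/δ(ε))|² dx → 0`. -/
theorem stmt4 {d : ℕ}
    (A : Matrix (Fin d) (Fin d) ℝ) (hA : A.PosDef)
    (δ : ℝ → ℝ) (hδ : ∀ ε : ℝ, 0 < ε → δ ε ∈ Set.Ioc (0:ℝ) 1)
    (hlim : Tendsto (fun ε => Real.sqrt ε / δ ε) (𝓝[>] (0:ℝ)) (𝓝 0))
    (h : EuclideanSpace ℝ (Fin d) → ℝ) (hh : ContDiff ℝ 1 h)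
    (hgrad0 : gradient h 0 = 0) :
    Tendsto (fun ε =>
        ε / (δ ε) ^ 2 * (2 * Real.pi * ε) ^ (-(d : ℝ) / 2) *
          ∫ x in Metric.closedBall (0 : EuclideanSpace ℝ (Fin d)) (δ ε),
            Real.exp (-(∑ i, ∑ j, x i * A i j * x j) / (2 * ε)) *
              ‖gradient h ((δ ε)⁻¹ • x)‖ ^ 2)
      (𝓝[>] (0:ℝ)) (𝓝 0) := by
  -- Step 1: coercivity of the quadratic form
  obtain ⟨c, hc, hcle⟩ : ∃ c > 0, ∀ x : EuclideanSpace ℝ (Fin d),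
      c * ‖x‖ ^ 2 ≤ ∑ i, ∑ j, x i * A i j * x j := by
    set V := EuclideanSpace ℝ (Fin d)
    set Q : V → ℝ := fun x => ∑ i, ∑ j, x i * A i j * x j with hQ
    have hQcont : Continuous Q := by
      have : Continuous (fun x : EuclideanSpace ℝ (Fin d) => ∑ i, ∑ j, x i * A i j * x j) := by fun_prop
      exact this
    have hQpos : ∀ x : V, x ≠ 0 → 0 < Q x := by
      intro x hx
      have := hA.dotProduct_mulVec_pos (x := (x : Fin d → ℝ)) (by exact fun h0 => hx (by ext i; exact congrFun h0 i))
      simpa [dotProduct, Matrix.mulVec, Finset.mul_sum, mul_assoc, Q] using this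
    have hhom : ∀ (a : ℝ) (x : V), Q (a • x) = a ^ 2 * Q x := by
      intro a x
      simp only [Q, Finset.mul_sum]
      refine Finset.sum_congr rfl fun i _ => Finset.sum_congr rfl fun j _ => ?_
      rw [show (a • x) i = a * x i from rfl, show (a • x) j = a * x j from rfl]; ring
    rcases Nat.eq_zero_or_pos d with hd | hd
    · refine ⟨1, one_pos, fun x => ?_⟩
      subst hd
      have : x = 0 := Subsingleton.elim x 0
      simp [this, Q]
    · have : Nontrivial V := by
        have : 0 < Module.finrank ℝ V := by simp [V, finrank_euclideanSpace_fin, hd]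
        exact Module.nontrivial_of_finrank_pos this
      obtain ⟨x₀, hx₀s, hx₀min⟩ := (isCompact_sphere (0:V) 1).exists_isMinOn
        (NormedSpace.sphere_nonempty.mpr zero_le_one) hQcont.continuousOn
      have hx₀norm : ‖x₀‖ = 1 := by simpa using hx₀s
      have hc : 0 < Q x₀ := hQpos x₀ (by intro h0; rw [h0] at hx₀norm; simp at hx₀norm)
      refine ⟨Q x₀, hc, fun x => ?_⟩
      show Q x₀ * ‖x‖ ^ 2 ≤ Q x
      rcases eq_or_ne x 0 with rfl | hx
      · simp [Q]
      · have hn : 0 < ‖x‖ := norm_pos_iff.mpr hx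
        have hy : (‖x‖⁻¹ • x) ∈ Metric.sphere (0:V) 1 := by
          simp [norm_smul, abs_of_pos (inv_pos.mpr hn), inv_mul_cancel₀ hn.ne']
        have hmin := hx₀min hy
        have hqx : Q x = ‖x‖ ^ 2 * Q (‖x‖⁻¹ • x) := by
          rw [← hhom]
          congr 1
          rw [smul_smul, mul_inv_cancel₀ hn.ne', one_smul]
        rw [hqx]
        have : Q x₀ ≤ Q (‖x‖⁻¹ • x) := hmin
        nlinarith [sq_nonneg ‖x‖]
  -- Step 2: gradient continuity and bound
  have hgc : Continuous (gradient h) := by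
    have : Continuous (fderiv ℝ h) := hh.continuous_fderiv one_ne_zero
    exact (InnerProductSpace.toDual ℝ _).symm.continuous.comp this
  obtain ⟨M, hM0, hM⟩ : ∃ M : ℝ, 0 ≤ M ∧
      ∀ y ∈ Metric.closedBall (0 : EuclideanSpace ℝ (Fin d)) 1, ‖gradient h y‖ ^ 2 ≤ M := by
    obtain ⟨C, hC⟩ := (isCompact_closedBall (0 : EuclideanSpace ℝ (Fin d))
      1).exists_bound_of_continuousOn hgc.continuousOn
    refine ⟨C ^ 2, sq_nonneg C, fun y hy => ?_⟩
    have := hC y hy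
    nlinarith [norm_nonneg (gradient h y)]
  set K := M / c ^ ((d : ℝ) / 2) with hK
  -- Step 3: key upper bound
  have key : ∀ ε : ℝ, 0 < ε →
      ε / (δ ε) ^ 2 * (2 * Real.pi * ε) ^ (-(d : ℝ) / 2) *
          (∫ x in Metric.closedBall (0 : EuclideanSpace ℝ (Fin d)) (δ ε),
            Real.exp (-(∑ i, ∑ j, x i * A i j * x j) / (2 * ε)) *
              ‖gradient h ((δ ε)⁻¹ • x)‖ ^ 2)
        ≤ (Real.sqrt ε / δ ε) ^ 2 * K := by
    intro ε hε
    obtain ⟨hδ0, hδ1⟩ := hδ ε hε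
    set b := c / (2 * ε) with hbdef
    have hb : 0 < b := by positivity
    have hgauss_int : Integrable
        (fun x : EuclideanSpace ℝ (Fin d) => Real.exp (-b * ‖x‖ ^ 2)) := by
      have h1 := (GaussianFourier.integrable_cexp_neg_mul_sq_norm_add
        (b := (b : ℂ)) (by simpa using hb) 0 (0 : EuclideanSpace ℝ (Fin d))).norm
      refine h1.congr ?_
      filter_upwards with x
      simp [Complex.norm_exp]
      norm_cast
      exact Or.inl rfl
    have hint2 : Integrable
        (fun x : EuclideanSpace ℝ (Fin d) => M * Real.exp (-b * ‖x‖ ^ 2)) :=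
      hgauss_int.const_mul M
    have hcont : Continuous (fun x : EuclideanSpace ℝ (Fin d) =>
        Real.exp (-(∑ i, ∑ j, x i * A i j * x j) / (2 * ε)) *
          ‖gradient h ((δ ε)⁻¹ • x)‖ ^ 2) := by
      have hQcont : Continuous (fun x : EuclideanSpace ℝ (Fin d) =>
          ∑ i, ∑ j, x i * A i j * x j) := by fun_prop
      exact ((hQcont.neg.div_const _).rexp).mul
        (((hgc.comp (continuous_const_smul _)).norm.pow 2))
    have hint1 : IntegrableOn (fun x : EuclideanSpace ℝ (Fin d) =>
        Real.exp (-(∑ i, ∑ j, x i * A i j * x j) / (2 * ε)) *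
          ‖gradient h ((δ ε)⁻¹ • x)‖ ^ 2)
        (Metric.closedBall 0 (δ ε)) :=
      hcont.continuousOn.integrableOn_compact (isCompact_closedBall _ _)
    have step1 : (∫ x in Metric.closedBall (0 : EuclideanSpace ℝ (Fin d)) (δ ε),
            Real.exp (-(∑ i, ∑ j, x i * A i j * x j) / (2 * ε)) *
              ‖gradient h ((δ ε)⁻¹ • x)‖ ^ 2)
        ≤ ∫ x in Metric.closedBall (0 : EuclideanSpace ℝ (Fin d)) (δ ε),
            M * Real.exp (-b * ‖x‖ ^ 2) := by
      refine setIntegral_mono_on hint1 hint2.integrableOn measurableSet_closedBall ?_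
      intro x hx
      have hxn : ‖x‖ ≤ δ ε := by simpa [Metric.mem_closedBall, dist_zero_right] using hx
      have hexp : Real.exp (-(∑ i, ∑ j, x i * A i j * x j) / (2 * ε))
          ≤ Real.exp (-b * ‖x‖ ^ 2) := by
        apply Real.exp_le_exp.mpr
        have heq : -b * ‖x‖ ^ 2 = -(c * ‖x‖ ^ 2) / (2 * ε) := by
          rw [hbdef]; ring
        rw [heq, div_le_div_iff_of_pos_right (by linarith), neg_le_neg_iff]
        exact hcle x
      have hmem : (δ ε)⁻¹ • x ∈ Metric.closedBall (0 : EuclideanSpace ℝ (Fin d)) 1 := by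
        rw [Metric.mem_closedBall, dist_zero_right, norm_smul,
          Real.norm_eq_abs, abs_of_pos (inv_pos.mpr hδ0)]
        calc (δ ε)⁻¹ * ‖x‖ ≤ (δ ε)⁻¹ * δ ε := by
              exact mul_le_mul_of_nonneg_left hxn (le_of_lt (inv_pos.mpr hδ0))
          _ = 1 := inv_mul_cancel₀ hδ0.ne'
      calc Real.exp (-(∑ i, ∑ j, x i * A i j * x j) / (2 * ε)) *
              ‖gradient h ((δ ε)⁻¹ • x)‖ ^ 2
          ≤ Real.exp (-b * ‖x‖ ^ 2) * M :=
            mul_le_mul hexp (hM _ hmem) (sq_nonneg _) (Real.exp_nonneg _)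
        _ = M * Real.exp (-b * ‖x‖ ^ 2) := mul_comm _ _
    have step2 : (∫ x in Metric.closedBall (0 : EuclideanSpace ℝ (Fin d)) (δ ε),
            M * Real.exp (-b * ‖x‖ ^ 2))
        ≤ ∫ x : EuclideanSpace ℝ (Fin d), M * Real.exp (-b * ‖x‖ ^ 2) := by
      refine setIntegral_le_integral hint2 ?_
      filter_upwards with x
      positivity
    have hval : (∫ x : EuclideanSpace ℝ (Fin d), M * Real.exp (-b * ‖x‖ ^ 2))
        = M * (Real.pi / b) ^ ((d : ℝ) / 2) := by
      rw [integral_const_mul, GaussianFourier.integral_rexp_neg_mul_sq_norm hb]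
      norm_num [finrank_euclideanSpace_fin]
    have hItot : (∫ x in Metric.closedBall (0 : EuclideanSpace ℝ (Fin d)) (δ ε),
            Real.exp (-(∑ i, ∑ j, x i * A i j * x j) / (2 * ε)) *
              ‖gradient h ((δ ε)⁻¹ • x)‖ ^ 2)
        ≤ M * (Real.pi / b) ^ ((d : ℝ) / 2) := by
      rw [← hval]; exact step1.trans step2
    have hP : 0 ≤ ε / (δ ε) ^ 2 * (2 * Real.pi * ε) ^ (-(d : ℝ) / 2) := by positivity
    have halg : ε / (δ ε) ^ 2 * (2 * Real.pi * ε) ^ (-(d : ℝ) / 2) *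
        (M * (Real.pi / b) ^ ((d : ℝ) / 2)) = (Real.sqrt ε / δ ε) ^ 2 * K := by
      have h2πε : (0:ℝ) < 2 * Real.pi * ε := by positivity
      rw [hbdef, hK, div_pow, Real.sq_sqrt hε.le]
      rw [show Real.pi / (c / (2 * ε)) = (2 * Real.pi * ε) / c by
        field_simp]
      rw [Real.div_rpow h2πε.le hc.le, neg_div, Real.rpow_neg h2πε.le]
      have hne : ((2 * Real.pi * ε) ^ ((d : ℝ) / 2)) ≠ 0 :=
        (Real.rpow_pos_of_pos h2πε _).ne'
      field_simp
    calc ε / (δ ε) ^ 2 * (2 * Real.pi * ε) ^ (-(d : ℝ) / 2) *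
          (∫ x in Metric.closedBall (0 : EuclideanSpace ℝ (Fin d)) (δ ε),
            Real.exp (-(∑ i, ∑ j, x i * A i j * x j) / (2 * ε)) *
              ‖gradient h ((δ ε)⁻¹ • x)‖ ^ 2)
        ≤ ε / (δ ε) ^ 2 * (2 * Real.pi * ε) ^ (-(d : ℝ) / 2) *
            (M * (Real.pi / b) ^ ((d : ℝ) / 2)) :=
          mul_le_mul_of_nonneg_left hItot hP
      _ = (Real.sqrt ε / δ ε) ^ 2 * K := halg
  -- Step 4: squeeze
  have hnonneg : ∀ ε : ℝ, 0 < ε →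
      0 ≤ ε / (δ ε) ^ 2 * (2 * Real.pi * ε) ^ (-(d : ℝ) / 2) *
          (∫ x in Metric.closedBall (0 : EuclideanSpace ℝ (Fin d)) (δ ε),
            Real.exp (-(∑ i, ∑ j, x i * A i j * x j) / (2 * ε)) *
              ‖gradient h ((δ ε)⁻¹ • x)‖ ^ 2) := by
    intro ε hε
    have hI : 0 ≤ ∫ x in Metric.closedBall (0 : EuclideanSpace ℝ (Fin d)) (δ ε),
        Real.exp (-(∑ i, ∑ j, x i * A i j * x j) / (2 * ε)) *
          ‖gradient h ((δ ε)⁻¹ • x)‖ ^ 2 :=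
      setIntegral_nonneg measurableSet_closedBall (fun x _ => by positivity)
    have hP : 0 ≤ ε / (δ ε) ^ 2 * (2 * Real.pi * ε) ^ (-(d : ℝ) / 2) := by positivity
    exact mul_nonneg hP hI
  have htends : Tendsto (fun ε => (Real.sqrt ε / δ ε) ^ 2 * K) (𝓝[>] (0:ℝ)) (𝓝 0) := by
    have := (hlim.pow 2).mul_const K
    simpa using this
  refine squeeze_zero' ?_ ?_ htends
  · filter_upwards [self_mem_nhdsWithin] with ε hε
    exact hnonneg ε hε
  · filter_upwards [self_mem_nhdsWithin] with ε hε
    exact key ε hε
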